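/- Let f, g be real monic polynomials of degree n, both with all roots real and simple, whose roots satisfy s₁ < t₁ < s₂ < t₂ < … < sₙ < tₙ where sᵢ are the roots of f and tᵢ the roots of g. Let d be a real number strictly less than the root separation of the pencil spanned by f and g. Then there exists N₀ such that for all N > N₀: every nonzero polynomial of the form a·f(x) + b·(x+N)·g(x) has all roots real and simple with pairwise gaps strictly greater than d. -/

import Mathlib

open Polynomial Filter
set_option linter.unusedSectionVars false
set_option linter.unusedVariables false
set_option maxHeartbeats 1000000

/-- A real polynomial all of whose roots are real and simple. -/
def SimpleRealRoots (p : Polynomial ℝ) : Prop :=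
  p ≠ 0 ∧ p.roots.card = p.natDegree ∧ p.roots.Nodup

/-- The minimal distance between distinct real roots of `p`
(`+∞` if `p` has at most one root). -/
noncomputable def rootSep (p : Polynomial ℝ) : ENNReal :=
  ⨅ (s : ℝ) (t : ℝ) (_ : p.IsRoot s) (_ : p.IsRoot t) (_ : s ≠ t), ENNReal.ofReal |s - t|

lemma rootSep_le {p : Polynomial ℝ} {u v : ℝ} (hu : p.IsRoot u) (hv : p.IsRoot v)
    (huv : u ≠ v) : rootSep p ≤ ENNReal.ofReal |u - v| := by
  refine iInf_le_of_le u (iInf_le_of_le v ?_)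
  exact iInf_le_of_le hu (iInf_le_of_le hv (iInf_le _ huv))

lemma dist_gt_of_rootSep {p : Polynomial ℝ} {d : ℝ} (h : ENNReal.ofReal d < rootSep p)
    {u v : ℝ} (hu : p.IsRoot u) (hv : p.IsRoot v) (huv : u ≠ v) : d < |u - v| := by
  have h2 := lt_of_lt_of_le h (rootSep_le hu hv huv)
  exact (ENNReal.ofReal_lt_ofReal_iff (abs_pos.mpr (sub_ne_zero.mpr huv))).1 h2

lemma rootSep_zero : rootSep (0 : Polynomial ℝ) = 0 := by
  by_contra h
  have h0 : 0 < rootSep (0 : Polynomial ℝ) := pos_iff_ne_zero.2 h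
  obtain ⟨r, _, hrpos, hr2⟩ := ENNReal.lt_iff_exists_real_btwn.1 h0
  have hrpos' : 0 < r := ENNReal.ofReal_pos.1 hrpos
  set x := min r 1 / 2 with hx
  have hxpos : 0 < x := by positivity
  have hle : rootSep (0 : Polynomial ℝ) ≤ ENNReal.ofReal |0 - x| :=
    rootSep_le (by simp [IsRoot]) (by simp [IsRoot]) (by simp [hxpos.ne])
  have hlt : ENNReal.ofReal |0 - x| < ENNReal.ofReal r := by
    rw [ENNReal.ofReal_lt_ofReal_iff hrpos']
    rw [zero_sub, abs_neg, abs_of_pos hxpos]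
    have : min r 1 ≤ r := min_le_left _ _
    simp only [hx]
    linarith
  exact absurd (hle.trans_lt hlt) (not_lt.2 hr2.le)

lemma rootSep_gt {p : Polynomial ℝ} (hp : p ≠ 0) {d : ℝ}
    (h : ∀ u v : ℝ, p.IsRoot u → p.IsRoot v → u ≠ v → d < |u - v|) :
    ENNReal.ofReal d < rootSep p := by
  classical
  set T : Finset ℝ := p.roots.toFinset with hT
  set P : Finset (ℝ × ℝ) := (T ×ˢ T).filter (fun q => q.1 ≠ q.2) with hP
  by_cases hPe : P.Nonempty
  · obtain ⟨⟨u, v⟩, hmem, hmin⟩ := Finset.exists_min_image P (fun q => |q.1 - q.2|) hPe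
    simp only [hP, Finset.mem_filter, Finset.mem_product] at hmem
    obtain ⟨⟨hu, hv⟩, hne⟩ := hmem
    have hu' : p.IsRoot u := (mem_roots hp).1 (Multiset.mem_toFinset.1 hu)
    have hv' : p.IsRoot v := (mem_roots hp).1 (Multiset.mem_toFinset.1 hv)
    have hmin' : rootSep p = ENNReal.ofReal |u - v| := by
      refine le_antisymm ?_ ?_
      · refine iInf_le_of_le u (iInf_le_of_le v ?_)
        exact iInf_le_of_le hu' (iInf_le_of_le hv' (iInf_le _ hne))
      · refine le_iInf fun a => le_iInf fun b => le_iInf fun ha => le_iInf fun hb =>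
          le_iInf fun hab => ?_
        apply ENNReal.ofReal_le_ofReal
        refine hmin (a, b) ?_
        simp only [hP, Finset.mem_filter, Finset.mem_product]
        exact ⟨⟨Multiset.mem_toFinset.2 ((mem_roots hp).2 ha),
          Multiset.mem_toFinset.2 ((mem_roots hp).2 hb)⟩, hab⟩
    rw [hmin']
    rw [ENNReal.ofReal_lt_ofReal_iff (abs_pos.mpr (sub_ne_zero.mpr hne))]
    exact h u v hu' hv' hne
  · have : rootSep p = ⊤ := by
      refine le_antisymm le_top ?_
      refine le_iInf fun a => le_iInf fun b => le_iInf fun ha => le_iInf fun hb =>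
        le_iInf fun hab => ?_
      exfalso
      exact hPe ⟨(a, b), by
        simp only [hP, Finset.mem_filter, Finset.mem_product]
        exact ⟨⟨Multiset.mem_toFinset.2 ((mem_roots hp).2 ha),
          Multiset.mem_toFinset.2 ((mem_roots hp).2 hb)⟩, hab⟩⟩
    rw [this]; exact ENNReal.ofReal_lt_top

lemma isRoot_smul_iff {c : ℝ} (hc : c ≠ 0) {p : Polynomial ℝ} {x : ℝ} :
    (c • p).IsRoot x ↔ p.IsRoot x := by
  simp [IsRoot, hc]

lemma rootSep_smul {c : ℝ} (hc : c ≠ 0) (p : Polynomial ℝ) :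
    rootSep (c • p) = rootSep p := by
  unfold rootSep
  refine iInf_congr fun u => iInf_congr fun v => ?_
  rw [iInf_congr_Prop (isRoot_smul_iff hc) fun _ => rfl]
  exact iInf_congr fun _ => iInf_congr_Prop (isRoot_smul_iff hc) fun _ => rfl

lemma prod_neg_of_single {n : ℕ} {a : Fin n → ℝ} {i : Fin n}
    (hi : a i < 0) (h : ∀ j, j ≠ i → 0 < a j) : (∏ j, a j) < 0 := by
  classical
  rw [← Finset.prod_erase_mul _ _ (Finset.mem_univ i)]
  apply mul_neg_of_pos_of_neg _ hi
  exact Finset.prod_pos fun j hj => h j (Finset.ne_of_mem_erase hj)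

lemma prod_pos_all {n : ℕ} {a : Fin n → ℝ} (h : ∀ j, 0 < a j) : 0 < ∏ j, a j :=
  Finset.prod_pos fun j _ => h j

/-- factorization of a monic polynomial with n distinct given roots -/
lemma eval_eq_prod_roots {n : ℕ} {f : Polynomial ℝ} (hfm : f.Monic)
    (hfd : f.natDegree = n) (s : Fin n → ℝ) (hsinj : Function.Injective s)
    (hfs : ∀ x : ℝ, f.IsRoot x ↔ ∃ i, s i = x) :
    (∀ x : ℝ, f.eval x = ∏ i, (x - s i)) ∧ f.roots = Multiset.map s Finset.univ.val ∧
      f.roots.card = f.natDegree := by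
  classical
  have hf0 : f ≠ 0 := hfm.ne_zero
  have hnod : (Multiset.map s Finset.univ.val).Nodup :=
    (Finset.univ.nodup).map hsinj
  have hle : Multiset.map s Finset.univ.val ≤ f.roots := by
    rw [Multiset.le_iff_subset hnod]
    intro x hx
    obtain ⟨i, _, rfl⟩ := Multiset.mem_map.1 hx
    exact (mem_roots hf0).2 ((hfs (s i)).2 ⟨i, rfl⟩)
  have hcard : f.roots.card ≤ (Multiset.map s Finset.univ.val).card := by
    rw [Multiset.card_map]
    simp only [Finset.card_val, Finset.card_univ, Fintype.card_fin]
    rw [← hfd]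
    exact f.card_roots' 
  have hroots : f.roots = Multiset.map s Finset.univ.val :=
    (Multiset.eq_of_le_of_card_le hle hcard).symm
  have hcard' : f.roots.card = f.natDegree := by
    rw [hroots, Multiset.card_map, hfd]; simp
  have hfact := prod_multiset_X_sub_C_of_monic_of_roots_card_eq hfm hcard'
  refine ⟨fun x => ?_, hroots, hcard'⟩
  conv_lhs => rw [← hfact]
  rw [hroots]
  rw [Multiset.map_map, eval_multiset_prod]
  simp only [Function.comp]
  rw [Multiset.map_map]
  rw [Finset.prod_eq_multiset_prod]
  congr 1
  simp [Function.comp]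

section Interlace
variable {m : ℕ} (s t : Fin (m+1) → ℝ) (hs : StrictMono s) (ht : StrictMono t)
  (hint1 : ∀ i, s i < t i)
  (hint2 : ∀ i j : Fin (m+1), (j : ℕ) = (i : ℕ) + 1 → t i < s j)

include hs ht hint1 hint2 in
lemma t_lt_s : ∀ i j : Fin (m+1), (j : ℕ) < (i : ℕ) → t j < s i := by
  intro i j hji
  have hj1 : (j : ℕ) + 1 < m + 1 := lt_of_le_of_lt hji i.isLt
  set k : Fin (m+1) := ⟨(j : ℕ) + 1, hj1⟩ with hk
  have h1 : t j < s k := hint2 j k rfl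
  have h2 : s k ≤ s i := hs.monotone hji
  linarith

include hs ht hint1 in
lemma s_lt_t : ∀ i j : Fin (m+1), (i : ℕ) ≤ (j : ℕ) → s i < t j := by
  intro i j hij
  have : s i ≤ s j := hs.monotone hij
  linarith [hint1 j]

include hs ht hint1 hint2 in
lemma s_ne_t : ∀ i j : Fin (m+1), s i ≠ t j := by
  intro i j
  rcases le_or_gt (i : ℕ) (j : ℕ) with h | h
  · exact ne_of_lt (s_lt_t s t hs ht hint1 i j h)
  · exact ne_of_gt (t_lt_s s t hs ht hint1 hint2 i j h)

end Interlace

section Signs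
variable {m : ℕ} {g : Polynomial ℝ} {s t : Fin (m+1) → ℝ} (hs : StrictMono s) (ht : StrictMono t)
  (hint1 : ∀ i, s i < t i)
  (hint2 : ∀ i j : Fin (m+1), (j : ℕ) = (i : ℕ) + 1 → t i < s j)
  (hG : ∀ x : ℝ, g.eval x = ∏ i, (x - t i))

-- t j < s i for j < i
variable (tlts : ∀ i j : Fin (m+1), (j : ℕ) < (i : ℕ) → t j < s i)
  (slts : ∀ i j : Fin (m+1), (i : ℕ) ≤ (j : ℕ) → s i < t j)

include hG tlts slts in
lemma gg_neg : ∀ i j : Fin (m+1), (j : ℕ) = (i : ℕ) + 1 →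
    g.eval (s i) * g.eval (s j) < 0 := by
  intro i j hij
  rw [hG, hG, ← Finset.prod_mul_distrib]
  refine prod_neg_of_single (i := i) ?_ ?_
  · have h1 : s i - t i < 0 := by linarith [slts i i le_rfl]
    have h2 : 0 < s j - t i := by
      have := tlts j i (by omega)
      linarith
    exact mul_neg_of_neg_of_pos h1 h2
  · intro k hk
    rcases lt_or_ge (k : ℕ) (i : ℕ) with h | h
    · have h1 : t k < s i := tlts i k h
      have h2 : t k < s j := tlts j k (by omega)
      have := mul_pos (by linarith : (0:ℝ) < s i - t k) (by linarith : (0:ℝ) < s j - t k)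
      linarith
    · have h' : (i : ℕ) < (k : ℕ) := lt_of_le_of_ne h (by
        intro hc; exact hk (Fin.ext hc.symm))
      have h1 : s i < t k := slts i k (le_of_lt h')
      have h2 : s j < t k := slts j k (by omega)
      have := mul_pos (by linarith : (0:ℝ) < t k - s i) (by linarith : (0:ℝ) < t k - s j)
      nlinarith
include hG tlts slts in
lemma g_last_neg : g.eval (s (Fin.last m)) < 0 := by
  rw [hG]
  refine prod_neg_of_single (i := Fin.last m) ?_ ?_
  · linarith [slts (Fin.last m) (Fin.last m) le_rfl]
  · intro k hk
    have hkm : (k : ℕ) < m := by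
      have := k.isLt
      have : (k : ℕ) ≠ m := fun hc => hk (Fin.ext (by simp [hc]))
      omega
    have := tlts (Fin.last m) k (by simp [Fin.last]; omega)
    linarith

include hG slts in
lemma g_zero_sign : 0 < (-1 : ℝ)^(m+1) * g.eval (s 0) := by
  rw [hG]
  have : ∀ i : Fin (m+1), s 0 - t i = (-1) * (t i - s 0) := fun i => by ring
  rw [Finset.prod_congr rfl (fun i _ => this i), Finset.prod_mul_distrib]
  rw [Finset.prod_const]
  simp only [Finset.card_univ, Fintype.card_fin]
  have hpos : 0 < ∏ i : Fin (m+1), (t i - s 0) := by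
    apply Finset.prod_pos
    intro i _
    have := slts 0 i (by simp)
    linarith
  calc (0:ℝ) < ((-1)^(m+1))^2 * ∏ i : Fin (m+1), (t i - s 0) := by
        rw [← pow_mul, pow_mul']
        simp [hpos]
   _ = (-1)^(m+1) * ((-1)^(m+1) * ∏ i : Fin (m+1), (t i - s 0)) := by ring

end Signs

lemma exists_root_Ioo {p : Polynomial ℝ} {a b : ℝ} (hab : a < b)
    (hsign : p.eval a * p.eval b < 0) : ∃ x, a < x ∧ x < b ∧ p.IsRoot x := by
  have hc : ContinuousOn (fun x => p.eval x) (Set.Icc a b) :=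
    (Polynomial.continuous p).continuousOn
  rcases lt_or_ge (p.eval a) 0 with h | h
  · have hb : 0 < p.eval b := by nlinarith
    obtain ⟨x, hx, hx0⟩ := intermediate_value_Ioo hab.le hc (a := a) (b := b) ⟨h, hb⟩
    exact ⟨x, hx.1, hx.2, hx0⟩
  · have ha : 0 < p.eval a := by
      rcases h.lt_or_eq with h' | h'
      · exact h'
      · exfalso; rw [← h'] at hsign; simp at hsign
    have hb : p.eval b < 0 := by nlinarith
    obtain ⟨x, hx, hx0⟩ := intermediate_value_Ioo' hab.le hc (a := a) (b := b) ⟨hb, ha⟩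
    exact ⟨x, hx.1, hx.2, hx0⟩

lemma P_monic {m : ℕ} {f g : Polynomial ℝ} (hfm : f.Monic) (hgm : g.Monic)
    (hfd : f.natDegree = m+1) (hgd : g.natDegree = m+1) (c N : ℝ) :
    (Polynomial.C c * f + (X + Polynomial.C N) * g).Monic ∧
    (Polynomial.C c * f + (X + Polynomial.C N) * g).natDegree = m + 2 := by
  have h2 : ((X + Polynomial.C N) * g).Monic := (monic_X_add_C N).mul hgm
  have hd2 : ((X + Polynomial.C N) * g).natDegree = m + 2 := by
    rw [(monic_X_add_C N).natDegree_mul hgm, natDegree_X_add_C, hgd]; omega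
  have hd1 : (Polynomial.C c * f).degree < ((X + Polynomial.C N) * g).degree := by
    apply lt_of_le_of_lt (degree_mul_le _ _)
    rw [degree_eq_natDegree h2.ne_zero, hd2]
    apply lt_of_le_of_lt (add_le_add degree_C_le (degree_le_natDegree))
    rw [hfd]
    norm_num
    exact_mod_cast Nat.lt_succ_self (m+1)
  constructor
  · rw [add_comm]; exact h2.add_of_left hd1
  · rw [add_comm]
    rw [natDegree_add_eq_left_of_degree_lt hd1, hd2]

lemma P_struct {m : ℕ} {f g : Polynomial ℝ} {s t : Fin (m+1) → ℝ}
    (hfm : f.Monic) (hgm : g.Monic) (hfd : f.natDegree = m+1) (hgd : g.natDegree = m+1)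
    (hfs : ∀ x : ℝ, f.IsRoot x ↔ ∃ i, s i = x)
    (hsmono : StrictMono s)
    (hggne : ∀ i j : Fin (m+1), (j : ℕ) = (i : ℕ) + 1 → g.eval (s i) * g.eval (s j) < 0)
    (hglast : g.eval (s (Fin.last m)) < 0)
    (hgzero : 0 < (-1 : ℝ)^(m+1) * g.eval (s 0))
    (hgs : ∀ i, g.eval (s i) ≠ 0)
    {N : ℝ} (hN : 0 < s 0 + N) (c : ℝ) :
    ∃ r : Fin (m+2) → ℝ,
      (∀ i : Fin (m+2), ∀ j : Fin (m+1), (j : ℕ) < (i : ℕ) → s j < r i) ∧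
      (∀ i : Fin (m+2), ∀ j : Fin (m+1), (i : ℕ) ≤ (j : ℕ) → r i < s j) ∧
      (∀ x : ℝ, (Polynomial.C c * f + (X + Polynomial.C N) * g).IsRoot x ↔ ∃ i, r i = x) ∧
      (Polynomial.C c * f + (X + Polynomial.C N) * g).roots.card = m + 2 ∧
      (Polynomial.C c * f + (X + Polynomial.C N) * g).roots.Nodup := by
  classical
  set P : Polynomial ℝ := Polynomial.C c * f + (X + Polynomial.C N) * g with hP
  obtain ⟨hPm, hPd⟩ := P_monic hfm hgm hfd hgd c N
  have hsN : ∀ i : Fin (m+1), 0 < s i + N := by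
    intro i
    have : s 0 ≤ s i := hsmono.monotone (Fin.zero_le i)
    linarith
  have hPeval : ∀ x : ℝ, P.eval x = c * f.eval x + (x + N) * g.eval x := by
    intro x; simp [hP]
  have hPevs : ∀ j : Fin (m+1), P.eval (s j) = (s j + N) * g.eval (s j) := by
    intro j
    rw [hPeval]
    have : f.eval (s j) = 0 := (hfs (s j)).2 ⟨j, rfl⟩
    rw [this]; ring
  -- right endpoint
  have htop : Tendsto (fun x => P.eval x) atTop atTop := by
    apply tendsto_atTop_of_leadingCoeff_nonneg
    · rw [degree_eq_natDegree hPm.ne_zero, hPd]; positivity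
    · rw [hPm.leadingCoeff]; norm_num
  obtain ⟨x₁, hx₁⟩ := ((htop.eventually_gt_atTop 0).and
    (eventually_gt_atTop (s (Fin.last m)))).exists
  -- left endpoint
  set Q : Polynomial ℝ := Polynomial.C ((-1:ℝ)^(m+2)) * P.comp (-X) with hQ
  have hQeval : ∀ x : ℝ, Q.eval x = (-1:ℝ)^(m+2) * P.eval (-x) := by
    intro x; simp [hQ]
  have hQne : P.comp (-X) ≠ 0 := by
    intro h
    have : (P.comp (-X)).natDegree = 0 := by rw [h]; simp
    rw [natDegree_comp] at this
    simp [show P.natDegree = m + 2 from hPd] at this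
  have hQtop : Tendsto (fun x => Q.eval x) atTop atTop := by
    apply tendsto_atTop_of_leadingCoeff_nonneg
    · have hC : ((-1:ℝ)^(m+2)) ≠ 0 := by
        intro h; have := pow_eq_zero_iff (n := m+2) (by omega) |>.1 h; norm_num at this
      rw [degree_eq_natDegree (mul_ne_zero (by simpa using hC) hQne)]
      rw [natDegree_C_mul hC, natDegree_comp, hPd]
      simp
      exact_mod_cast Nat.succ_pos (m+1)
    · rw [leadingCoeff_mul, leadingCoeff_C, leadingCoeff_comp (by simp : (-X : Polynomial ℝ).natDegree ≠ 0)]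
      rw [hPm.leadingCoeff, hPd]
      simp [leadingCoeff_neg]
      exact mul_self_nonneg _
  obtain ⟨x₀, hx₀⟩ := ((hQtop.eventually_gt_atTop 0).and
    (eventually_gt_atTop (-(s 0)))).exists
  set y₀ : ℝ := -x₀ with hy₀
  have hy₀lt : y₀ < s 0 := by
    have := hx₀.2; simp [hy₀]; linarith
  have hy₀sign : 0 < (-1:ℝ)^(m+2) * P.eval y₀ := by
    have := hx₀.1
    rw [hQeval] at this
    simpa [hy₀] using this
  have hsq : ((-1:ℝ)^(m+2)) * ((-1:ℝ)^(m+2)) = 1 := by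
    rw [← pow_add]
    exact Even.neg_one_pow ⟨m+2, by ring⟩
  -- sign at s 0 vs y₀
  have h0sign : P.eval y₀ * P.eval (s 0) < 0 := by
    have h1 : (-1:ℝ)^(m+2) * P.eval (s 0) < 0 := by
      rw [hPevs 0]
      have hneg : (-1:ℝ)^(m+2) = -((-1:ℝ)^(m+1)) := by ring
      rw [hneg]
      nlinarith [hsN 0, hgzero]
    calc P.eval y₀ * P.eval (s 0)
        = ((-1:ℝ)^(m+2) * P.eval y₀) * ((-1:ℝ)^(m+2) * P.eval (s 0)) := by
          conv_rhs => rw [mul_mul_mul_comm, hsq, one_mul]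
      _ < 0 := mul_neg_of_pos_of_neg hy₀sign h1
  -- the chain of endpoints
  set lo : Fin (m+2) → ℝ := fun i => if h : (i:ℕ) = 0 then y₀ else s ⟨(i:ℕ)-1, by omega⟩
    with hlo
  set hi : Fin (m+2) → ℝ := fun i => if h : (i:ℕ) < m+1 then s ⟨(i:ℕ), h⟩ else x₁ with hhi
  have key : ∀ i : Fin (m+2), lo i < hi i ∧ P.eval (lo i) * P.eval (hi i) < 0 := by
    intro i
    by_cases h0 : (i:ℕ) = 0
    · have hlo0 : lo i = y₀ := by simp only [hlo]; rw [dif_pos h0]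
      have hhi0 : hi i = s 0 := by
        have h01 : (i:ℕ) < m+1 := by omega
        simp only [hhi]
        rw [dif_pos h01]
        congr 1
        exact Fin.ext (by simp [h0])
      rw [hlo0, hhi0]
      exact ⟨hy₀lt, h0sign⟩
    · by_cases h1 : (i:ℕ) < m+1
      · have hlo1 : lo i = s ⟨(i:ℕ)-1, by omega⟩ := by simp only [hlo]; rw [dif_neg h0]
        have hhi1 : hi i = s ⟨(i:ℕ), h1⟩ := by simp only [hhi]; rw [dif_pos h1]
        rw [hlo1, hhi1]
        have hcons : ((⟨(i:ℕ), h1⟩ : Fin (m+1)) : ℕ) = ((⟨(i:ℕ)-1, by omega⟩ : Fin (m+1)) : ℕ) + 1 := by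
          simp; omega
        constructor
        · exact hsmono (Fin.mk_lt_mk.2 (by omega))
        · rw [hPevs, hPevs]
          have hgg := hggne _ _ hcons
          calc (s ⟨(i:ℕ)-1, by omega⟩ + N) * g.eval (s ⟨(i:ℕ)-1, by omega⟩) *
                ((s ⟨(i:ℕ), h1⟩ + N) * g.eval (s ⟨(i:ℕ), h1⟩))
              = ((s ⟨(i:ℕ)-1, by omega⟩ + N) * (s ⟨(i:ℕ), h1⟩ + N)) *
                (g.eval (s ⟨(i:ℕ)-1, by omega⟩) * g.eval (s ⟨(i:ℕ), h1⟩)) := by ring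
            _ < 0 := mul_neg_of_pos_of_neg
                (mul_pos (hsN ⟨(i:ℕ)-1, by omega⟩) (hsN ⟨(i:ℕ), h1⟩)) hgg
      · have hieq : (i:ℕ) = m+1 := by have := i.isLt; omega
        have hlo1 : lo i = s (Fin.last m) := by
          simp only [hlo]
          rw [dif_neg h0]
          congr 1
          exact Fin.ext (by simp [Fin.last, hieq])
        have hhi1 : hi i = x₁ := by simp [hhi, hieq]
        rw [hlo1, hhi1]
        refine ⟨hx₁.2, ?_⟩
        have hev : P.eval (s (Fin.last m)) < 0 := by
          rw [hPevs]
          exact mul_neg_of_pos_of_neg (hsN _) hglast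
        exact mul_neg_of_neg_of_pos hev hx₁.1
  have hroot : ∀ i : Fin (m+2), ∃ x, lo i < x ∧ x < hi i ∧ P.IsRoot x := fun i =>
    exists_root_Ioo (key i).1 (key i).2
  choose r hrlo hrhi hrroot using hroot
  have hgtS : ∀ i : Fin (m+2), ∀ j : Fin (m+1), (j : ℕ) < (i : ℕ) → s j < r i := by
    intro i j hji
    have h0 : (i:ℕ) ≠ 0 := by omega
    have : s j ≤ lo i := by
      simp only [hlo]
      rw [dif_neg h0]
      exact hsmono.monotone (by simp [Fin.le_def]; omega)
    linarith [hrlo i]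
  have hltS : ∀ i : Fin (m+2), ∀ j : Fin (m+1), (i : ℕ) ≤ (j : ℕ) → r i < s j := by
    intro i j hij
    have h1 : (i:ℕ) < m+1 := by have := j.isLt; omega
    have : hi i ≤ s j := by
      simp only [hhi]
      rw [dif_pos h1]
      exact hsmono.monotone (by simp [Fin.le_def]; omega)
    linarith [hrhi i]
  have hrmono : ∀ i k : Fin (m+2), (i:ℕ) < (k:ℕ) → r i < r k := by
    intro i k hik
    have hi1 : (i:ℕ) < m+1 := by have := k.isLt; omega
    have h1 : r i < s ⟨(i:ℕ), hi1⟩ := hltS i ⟨(i:ℕ), hi1⟩ (by simp)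
    have h2 : s ⟨(i:ℕ), hi1⟩ < r k := hgtS k ⟨(i:ℕ), hi1⟩ (by simp [hik])
    linarith
  have rinj : Function.Injective r := by
    intro i k h
    by_contra hne
    rcases lt_or_gt_of_ne (fun hc : (i:ℕ) = (k:ℕ) => hne (Fin.ext hc)) with hlt | hgt
    · exact absurd h (ne_of_lt (hrmono i k hlt))
    · exact absurd h.symm (ne_of_lt (hrmono k i hgt))
  classical
  set F : Finset ℝ := Finset.image r Finset.univ with hF
  have hFcard : F.card = m + 2 := by
    rw [hF, Finset.card_image_of_injective _ rinj, Finset.card_univ, Fintype.card_fin]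
  have hFle : F.val ≤ P.roots := by
    rw [Multiset.le_iff_subset F.nodup]
    intro x hx
    rw [Finset.mem_val, hF, Finset.mem_image] at hx
    obtain ⟨i, _, rfl⟩ := hx
    exact (mem_roots hPm.ne_zero).2 (hrroot i)
  have hcardle : P.roots.card ≤ F.val.card := by
    have := P.card_roots'
    rw [hPd] at this
    simpa [hFcard] using this
  have hroots : P.roots = F.val := (Multiset.eq_of_le_of_card_le hFle hcardle).symm
  refine ⟨r, hgtS, hltS, ?_, ?_, ?_⟩
  · intro x
    constructor
    · intro hx
      have : x ∈ P.roots := (mem_roots hPm.ne_zero).2 hx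
      rw [hroots, Finset.mem_val, hF, Finset.mem_image] at this
      obtain ⟨i, _, rfl⟩ := this
      exact ⟨i, rfl⟩
    · rintro ⟨i, rfl⟩
      exact hrroot i
  · rw [hroots]
    exact hFcard
  · rw [hroots]
    exact F.nodup

lemma prod_neg_of_single' {n : ℕ} {a : Fin n → ℝ} {i : Fin n}
    (hi : a i < 0) (h : ∀ j, j ≠ i → 0 < a j) : (∏ j, a j) < 0 := by
  classical
  rw [← Finset.prod_erase_mul _ _ (Finset.mem_univ i)]
  exact mul_neg_of_pos_of_neg
    (Finset.prod_pos fun j hj => h j (Finset.ne_of_mem_erase hj)) hi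

lemma exists_eta {m : ℕ} (s t : Fin (m+1) → ℝ) (hsinj : Function.Injective s)
    (hst : ∀ i j, s i ≠ t j) :
    ∃ η : ℝ, 0 < η ∧ (∀ i j, 2*η ≤ |s i - t j|) ∧
      (∀ i j, i ≠ j → 2*η ≤ |s i - s j|) := by
  classical
  set D : Finset ℝ :=
    (Finset.univ.image fun q : Fin (m+1) × Fin (m+1) => |s q.1 - t q.2|) ∪
    ((Finset.univ.filter fun q : Fin (m+1) × Fin (m+1) => q.1 ≠ q.2).image
      fun q => |s q.1 - s q.2|) with hD
  have hDne : D.Nonempty := by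
    refine ⟨|s 0 - t 0|, ?_⟩
    rw [hD, Finset.mem_union]
    exact Or.inl (Finset.mem_image.2 ⟨(0,0), Finset.mem_univ _, rfl⟩)
  have hpos : ∀ x ∈ D, 0 < x := by
    intro x hx
    rw [hD, Finset.mem_union] at hx
    rcases hx with hx | hx
    · obtain ⟨q, _, rfl⟩ := Finset.mem_image.1 hx
      exact abs_pos.2 (sub_ne_zero.2 (hst q.1 q.2))
    · obtain ⟨q, hq, rfl⟩ := Finset.mem_image.1 hx
      rw [Finset.mem_filter] at hq
      exact abs_pos.2 (sub_ne_zero.2 fun hc => hq.2 (hsinj hc))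
  have hm : 0 < D.min' hDne := hpos _ (D.min'_mem hDne)
  refine ⟨D.min' hDne / 2, by linarith, ?_, ?_⟩
  · intro i j
    have : D.min' hDne ≤ |s i - t j| := Finset.min'_le _ _ (by
      rw [hD, Finset.mem_union]
      exact Or.inl (Finset.mem_image.2 ⟨(i,j), Finset.mem_univ _, rfl⟩))
    linarith
  · intro i j hij
    have : D.min' hDne ≤ |s i - s j| := Finset.min'_le _ _ (by
      rw [hD, Finset.mem_union]
      refine Or.inr (Finset.mem_image.2 ⟨(i,j), ?_, rfl⟩)
      rw [Finset.mem_filter]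
      exact ⟨Finset.mem_univ _, hij⟩)
    linarith

lemma key_sep {m : ℕ} {f g : Polynomial ℝ} {s t : Fin (m+1) → ℝ} {d : ℝ}
    (hF : ∀ x : ℝ, f.eval x = ∏ i, (x - s i))
    (hG : ∀ x : ℝ, g.eval x = ∏ i, (x - t i))
    (hsmono : StrictMono s)
    (hst : ∀ i j, s i ≠ t j)
    (hd0 : 0 ≤ d)
    (hsep : ∀ a b : ℝ, (a, b) ≠ (0, 0) → ∀ u v : ℝ,
      (a • f + b • g).IsRoot u → (a • f + b • g).IsRoot v → u ≠ v → d < |u - v|) :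
    ∃ N₀ : ℝ, 0 ≤ N₀ ∧ ∀ N : ℝ, N₀ < N → ∀ c u v : ℝ,
      c * f.eval u + (u + N) * g.eval u = 0 →
      c * f.eval v + (v + N) * g.eval v = 0 →
      (∃ j, u < s j ∧ s j < v) → v - u ≤ d → False := by
  classical
  obtain ⟨η, hη, hηst, hηss⟩ := exists_eta s t hsmono.injective hst
  set a₁ : ℝ := s 0 - d with ha₁
  set a₂ : ℝ := s (Fin.last m) + d with ha₂
  have ha₁₂ : a₁ ≤ a₂ := by
    have : s 0 ≤ s (Fin.last m) := hsmono.monotone (Fin.zero_le _)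
    simp only [ha₁, ha₂]; linarith
  have hgs : ∀ i, g.eval (s i) ≠ 0 := by
    intro i
    rw [hG]
    exact Finset.prod_ne_zero_iff.2 fun j _ => sub_ne_zero.2 (hst i j)
  -- the bad compact set
  set S : Set (ℝ × ℝ) := {q | q.1 ∈ Set.Icc a₁ a₂ ∧ q.2 ∈ Set.Icc a₁ a₂ ∧
      q.2 - q.1 ≤ d ∧ ∃ j, q.1 ≤ s j ∧ s j ≤ q.2 ∧ (η ≤ s j - q.1 ∨ η ≤ q.2 - s j)}
    with hS
  -- the key claim : W ≠ 0 on S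
  have claim : ∀ q : ℝ × ℝ, q ∈ S →
      g.eval q.1 * f.eval q.2 - g.eval q.2 * f.eval q.1 ≠ 0 := by
    rintro ⟨u, v⟩ ⟨hu, hv, hvu, j, hju, hjv, hjn⟩ hW
    simp only at hW hvu hju hjv hjn
    have huv : u ≤ v := le_trans hju hjv
    have hune : u ≠ v := by
      intro h
      subst h
      have h1 : s j = u := le_antisymm hjv hju
      rcases hjn with h2 | h2 <;> rw [h1] at h2 <;> linarith
    have habs : |u - v| = v - u := by
      rw [abs_sub_comm]; exact abs_of_nonneg (by linarith)
    by_cases hfu : f.eval u = 0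
    · obtain ⟨i, hi⟩ : ∃ i, s i = u := by
        rw [hF] at hfu
        obtain ⟨i, _, hi⟩ := Finset.prod_eq_zero_iff.1 hfu
        exact ⟨i, by linarith [sub_eq_zero.1 hi]⟩
      have hgu : g.eval u ≠ 0 := by rw [← hi]; exact hgs i
      have hfv : f.eval v = 0 := by
        rw [hfu, mul_zero, sub_zero, mul_eq_zero] at hW
        tauto
      obtain ⟨l, hl⟩ : ∃ l, s l = v := by
        rw [hF] at hfv
        obtain ⟨l, _, hl⟩ := Finset.prod_eq_zero_iff.1 hfv
        exact ⟨l, by linarith [sub_eq_zero.1 hl]⟩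
      have hil : i ≠ l := fun hc => hune (by rw [← hi, ← hl, hc])
      have := hsep 1 0 (by simp) u v (by simp [IsRoot, hfu]) (by simp [IsRoot, hfv])
        hune
      rw [habs] at this
      linarith
    · by_cases hfv : f.eval v = 0
      · have hgv : g.eval v ≠ 0 := by
          obtain ⟨l, hl⟩ : ∃ l, s l = v := by
            rw [hF] at hfv
            obtain ⟨l, _, hl⟩ := Finset.prod_eq_zero_iff.1 hfv
            exact ⟨l, by linarith [sub_eq_zero.1 hl]⟩
          rw [← hl]; exact hgs l
        rw [hfv, mul_zero, zero_sub, neg_eq_zero, mul_eq_zero] at hW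
        tauto
      · -- both nonzero : u v are roots of a pencil member
        set c' : ℝ := g.eval u / f.eval u with hc'
        have h1 : ((-c') • f + (1:ℝ) • g).IsRoot u := by
          simp only [IsRoot, eval_add, eval_smul, smul_eq_mul, one_mul, hc']
          field_simp
          ring
        have h2 : ((-c') • f + (1:ℝ) • g).IsRoot v := by
          simp only [IsRoot, eval_add, eval_smul, smul_eq_mul, one_mul, hc']
          have : g.eval v = g.eval u / f.eval u * f.eval v := by
            field_simp
            linarith [hW]
          rw [this]
          ring
        have := hsep (-c') 1 (by simp) u v h1 h2 hune
        rw [habs] at this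
        linarith
  -- compactness
  have hIcc : IsCompact (Set.Icc a₁ a₂ ×ˢ Set.Icc a₁ a₂) :=
    isCompact_Icc.prod isCompact_Icc
  have hSsub : S ⊆ Set.Icc a₁ a₂ ×ˢ Set.Icc a₁ a₂ := by
    rintro ⟨u, v⟩ ⟨hu, hv, _⟩
    exact ⟨hu, hv⟩
  have hSclosed : IsClosed S := by
    have h1 : IsClosed {q : ℝ × ℝ | q.1 ∈ Set.Icc a₁ a₂} :=
      (isClosed_Icc).preimage continuous_fst
    have h2 : IsClosed {q : ℝ × ℝ | q.2 ∈ Set.Icc a₁ a₂} :=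
      (isClosed_Icc).preimage continuous_snd
    have h3 : IsClosed {q : ℝ × ℝ | q.2 - q.1 ≤ d} :=
      isClosed_le (continuous_snd.sub continuous_fst) continuous_const
    have h4 : IsClosed {q : ℝ × ℝ | ∃ j, q.1 ≤ s j ∧ s j ≤ q.2 ∧
        (η ≤ s j - q.1 ∨ η ≤ q.2 - s j)} := by
      have : {q : ℝ × ℝ | ∃ j, q.1 ≤ s j ∧ s j ≤ q.2 ∧
          (η ≤ s j - q.1 ∨ η ≤ q.2 - s j)} =
          ⋃ j, ({q : ℝ × ℝ | q.1 ≤ s j} ∩ {q | s j ≤ q.2} ∩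
            ({q | η ≤ s j - q.1} ∪ {q | η ≤ q.2 - s j})) := by
        ext q
        simp only [Set.mem_setOf_eq, Set.mem_iUnion, Set.mem_inter_iff, Set.mem_union]
        constructor
        · rintro ⟨j, h1, h2, h3⟩; exact ⟨j, ⟨h1, h2⟩, h3⟩
        · rintro ⟨j, ⟨h1, h2⟩, h3⟩; exact ⟨j, h1, h2, h3⟩
      rw [this]
      apply isClosed_iUnion_of_finite
      intro j
      refine IsClosed.inter (IsClosed.inter ?_ ?_) (IsClosed.union ?_ ?_)
      · exact isClosed_le continuous_fst continuous_const
      · exact isClosed_le continuous_const continuous_snd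
      · exact isClosed_le continuous_const (continuous_const.sub continuous_fst)
      · exact isClosed_le continuous_const (continuous_snd.sub continuous_const)
    have : S = ({q : ℝ × ℝ | q.1 ∈ Set.Icc a₁ a₂} ∩ {q | q.2 ∈ Set.Icc a₁ a₂}) ∩
        ({q : ℝ × ℝ | q.2 - q.1 ≤ d} ∩ {q | ∃ j, q.1 ≤ s j ∧ s j ≤ q.2 ∧
          (η ≤ s j - q.1 ∨ η ≤ q.2 - s j)}) := by
      ext q
      simp only [hS, Set.mem_setOf_eq, Set.mem_inter_iff]
      constructor
      · rintro ⟨h1, h2, h3, h4⟩; exact ⟨⟨h1, h2⟩, h3, h4⟩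
      · rintro ⟨⟨h1, h2⟩, h3, h4⟩; exact ⟨h1, h2, h3, h4⟩
    rw [this]
    exact ((h1.inter h2).inter (h3.inter h4))
  have hScomp : IsCompact S := hIcc.of_isClosed_subset hSclosed hSsub
  have hWcont : Continuous fun q : ℝ × ℝ =>
      |g.eval q.1 * f.eval q.2 - g.eval q.2 * f.eval q.1| := by
    apply Continuous.abs
    exact (((g.continuous).comp continuous_fst).mul
      ((f.continuous).comp continuous_snd)).sub
      (((g.continuous).comp continuous_snd).mul ((f.continuous).comp continuous_fst))
  -- min δ on S
  obtain ⟨δ, hδpos, hδle⟩ : ∃ δ : ℝ, 0 < δ ∧ ∀ q ∈ S,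
      δ ≤ |g.eval q.1 * f.eval q.2 - g.eval q.2 * f.eval q.1| := by
    rcases Set.eq_empty_or_nonempty S with hSe | hSne
    · exact ⟨1, one_pos, fun q hq => by rw [hSe] at hq; exact absurd hq (Set.notMem_empty q)⟩
    · obtain ⟨q₀, hq₀, hmin⟩ := hScomp.exists_isMinOn hSne hWcont.continuousOn
      refine ⟨_, ?_, fun q hq => hmin hq⟩
      have := claim q₀ hq₀
      positivity
  -- max C₀ on the box
  have hEcont : Continuous fun q : ℝ × ℝ =>
      |q.1 * (g.eval q.1 * f.eval q.2) - q.2 * (g.eval q.2 * f.eval q.1)| := by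
    apply Continuous.abs
    exact (continuous_fst.mul (((g.continuous).comp continuous_fst).mul
      ((f.continuous).comp continuous_snd))).sub
      (continuous_snd.mul (((g.continuous).comp continuous_snd).mul
        ((f.continuous).comp continuous_fst)))
  obtain ⟨q₁, hq₁, hmax⟩ := hIcc.exists_isMaxOn
    (⟨(a₁, a₁), Set.mem_prod.2 ⟨Set.left_mem_Icc.2 ha₁₂, Set.left_mem_Icc.2 ha₁₂⟩⟩)
    hEcont.continuousOn
  set C₀ : ℝ := |q₁.1 * (g.eval q₁.1 * f.eval q₁.2) - q₁.2 * (g.eval q₁.2 * f.eval q₁.1)|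
    with hC₀
  have hC₀le : ∀ q ∈ Set.Icc a₁ a₂ ×ˢ Set.Icc a₁ a₂,
      |q.1 * (g.eval q.1 * f.eval q.2) - q.2 * (g.eval q.2 * f.eval q.1)| ≤ C₀ :=
    fun q hq => hmax hq
  -- choice of N₀
  refine ⟨max (C₀ / δ) (max (d - s 0) 0), le_max_of_le_right (le_max_right _ _), ?_⟩
  intro N hN c u v hu hv ⟨j, hju, hjv⟩ hvu
  have hNpos : 0 < N := lt_of_le_of_lt (le_max_of_le_right (le_max_right _ _)) hN
  have hNds : d - s 0 < N := lt_of_le_of_lt (le_max_of_le_right (le_max_left _ _)) hN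
  have hNC : C₀ / δ < N := lt_of_le_of_lt (le_max_left _ _) hN
  have huv : u < v := lt_trans hju hjv
  have hs0j : s 0 ≤ s j := hsmono.monotone (Fin.zero_le _)
  have hsjl : s j ≤ s (Fin.last m) := hsmono.monotone (Fin.le_last _)
  have hua : u ∈ Set.Icc a₁ a₂ := by
    constructor
    · simp only [ha₁]; linarith
    · simp only [ha₂]; linarith
  have hva : v ∈ Set.Icc a₁ a₂ := by
    constructor
    · simp only [ha₁]; linarith
    · simp only [ha₂]; linarith
  have huN : 0 < u + N := by
    have : a₁ ≤ u := hua.1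
    simp only [ha₁] at this
    linarith
  have hvN : 0 < v + N := by linarith
  -- the elimination identity
  have helim : (u + N) * (g.eval u * f.eval v) = (v + N) * (g.eval v * f.eval u) := by
    linear_combination f.eval v * hu - f.eval u * hv
  by_cases hcase : η ≤ s j - u ∨ η ≤ v - s j
  · -- quantitative case
    have hqS : (u, v) ∈ S := ⟨hua, hva, hvu, j, hju.le, hjv.le, hcase⟩
    have hδW := hδle (u, v) hqS
    have hEC := hC₀le (u, v) (Set.mem_prod.2 ⟨hua, hva⟩)
    simp only at hδW hEC
    have hkey : N * (g.eval u * f.eval v - g.eval v * f.eval u) =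
        -(u * (g.eval u * f.eval v) - v * (g.eval v * f.eval u)) := by
      linear_combination helim
    have h1 : N * δ ≤ N * |g.eval u * f.eval v - g.eval v * f.eval u| :=
      mul_le_mul_of_nonneg_left hδW hNpos.le
    have h2 : N * |g.eval u * f.eval v - g.eval v * f.eval u| =
        |u * (g.eval u * f.eval v) - v * (g.eval v * f.eval u)| := by
      rw [← abs_of_pos hNpos, ← abs_mul, hkey, abs_neg]
    have h3 : C₀ < N * δ := by
      rw [div_lt_iff₀ hδpos] at hNC
      linarith
    linarith [h1, h2.le, hEC, h3]
  · -- near-pole sign case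
    push_neg at hcase
    obtain ⟨hc1, hc2⟩ := hcase
    have hffneg : f.eval u * f.eval v < 0 := by
      rw [hF u, hF v, ← Finset.prod_mul_distrib]
      refine prod_neg_of_single' (i := j) ?_ ?_
      · exact mul_neg_of_neg_of_pos (by linarith) (by linarith)
      · intro k hk
        rcases (hsmono.injective.ne_iff.2 (Ne.symm hk)).lt_or_gt with hlt | hlt
        · -- s j < s k
          have h2η := hηss j k (Ne.symm hk)
          rw [abs_of_neg (by linarith : s j - s k < 0)] at h2η
          have hkv : v < s k := by linarith
          exact mul_pos_of_neg_of_neg (by linarith) (by linarith)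
        · -- s k < s j
          have h2η := hηss j k (Ne.symm hk)
          rw [abs_of_pos (by linarith : (0:ℝ) < s j - s k)] at h2η
          have hku : s k < u := by linarith
          exact mul_pos (by linarith) (by linarith)
    have hggpos : 0 < g.eval u * g.eval v := by
      rw [hG u, hG v, ← Finset.prod_mul_distrib]
      apply Finset.prod_pos
      intro k _
      rcases (hst j k).lt_or_gt with hlt | hlt
      · have h2η := hηst j k
        rw [abs_of_neg (by linarith : s j - t k < 0)] at h2η
        have hvt : v < t k := by linarith
        exact mul_pos_of_neg_of_neg (by linarith) (by linarith)
      · have h2η := hηst j k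
        rw [abs_of_pos (by linarith : (0:ℝ) < s j - t k)] at h2η
        have htu : t k < u := by linarith
        exact mul_pos (by linarith) (by linarith)
    have hLR : ((u + N) * (g.eval u * f.eval v)) * ((v + N) * (g.eval v * f.eval u)) < 0 := by
      have : ((u + N) * (g.eval u * f.eval v)) * ((v + N) * (g.eval v * f.eval u)) =
          ((u + N) * (v + N)) * ((g.eval u * g.eval v) * (f.eval u * f.eval v)) := by
        ring
      rw [this]
      exact mul_neg_of_pos_of_neg (mul_pos huN hvN)
        (mul_neg_of_pos_of_neg hggpos hffneg)
    rw [helim] at hLR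
    nlinarith [mul_self_nonneg ((v + N) * (g.eval v * f.eval u))]
theorem stmt7 (n : ℕ) (f g : Polynomial ℝ) (hfm : f.Monic) (hgm : g.Monic)
    (hfd : f.natDegree = n) (hgd : g.natDegree = n)
    (s t : Fin n → ℝ) (hs : StrictMono s) (ht : StrictMono t)
    (hfs : ∀ x : ℝ, f.IsRoot x ↔ ∃ i, s i = x)
    (hgt : ∀ x : ℝ, g.IsRoot x ↔ ∃ i, t i = x)
    (hint1 : ∀ i, s i < t i)
    (hint2 : ∀ i j : Fin n, (j : ℕ) = (i : ℕ) + 1 → t i < s j)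
    (d : ℝ)
    (hd : ∀ a b : ℝ, (a, b) ≠ (0, 0) → ENNReal.ofReal d < rootSep (a • f + b • g)) :
    ∃ N₀ : ℝ, ∀ N : ℝ, N₀ < N → ∀ a b : ℝ, (a, b) ≠ (0, 0) →
      SimpleRealRoots (a • f + b • ((Polynomial.X + Polynomial.C N) * g)) ∧
      ENNReal.ofReal d < rootSep (a • f + b • ((Polynomial.X + Polynomial.C N) * g)) := by
  classical
  rcases n with _ | m
  · -- degenerate case : f = g = 1, the pencil contains 0, contradiction with hd
    exfalso
    have hf1 : f = 1 := hfm.natDegree_eq_zero.1 hfd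
    have hg1 : g = 1 := hgm.natDegree_eq_zero.1 hgd
    have h0 : (1:ℝ) • f + (-1:ℝ) • g = 0 := by rw [hf1, hg1]; simp
    have := hd 1 (-1) (by simp)
    rw [h0, rootSep_zero] at this
    simp at this
  · -- main case
    -- replace d by max d 0
    set d' : ℝ := max d 0 with hd'def
    have hofReal : ENNReal.ofReal d' = ENNReal.ofReal d := by
      rcases le_total d 0 with h | h
      · rw [hd'def, max_eq_right h, ENNReal.ofReal_zero, ENNReal.ofReal_of_nonpos h]
      · rw [hd'def, max_eq_left h]
    have hd0 : 0 ≤ d' := le_max_right _ _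
    have hdd : ∀ a b : ℝ, (a, b) ≠ (0, 0) →
        ENNReal.ofReal d' < rootSep (a • f + b • g) := by
      intro a b hab; rw [hofReal]; exact hd a b hab
    -- basic interlacing facts
    have tlts := t_lt_s s t hs ht hint1 hint2
    have slts := s_lt_t s t hs ht hint1
    have hstne := s_ne_t s t hs ht hint1 hint2
    -- factorizations
    obtain ⟨hF, hfroots, hfcard⟩ := eval_eq_prod_roots hfm hfd s hs.injective hfs
    obtain ⟨hG, hgroots, hgcard⟩ := eval_eq_prod_roots hgm hgd t ht.injective hgt
    -- sign facts for g at the roots of f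
    have hggne := gg_neg (g := g) (s := s) (t := t) hG tlts slts
    have hglast := g_last_neg (g := g) (s := s) (t := t) hG tlts slts
    have hgzero := g_zero_sign (g := g) (s := s) (t := t) hG slts
    have hgs : ∀ i, g.eval (s i) ≠ 0 := by
      intro i
      rw [hG]
      exact Finset.prod_ne_zero_iff.2 fun j _ => sub_ne_zero.2 (hstne i j)
    -- pairwise root distances of pencil members
    have hsep : ∀ a b : ℝ, (a, b) ≠ (0, 0) → ∀ u v : ℝ,
        (a • f + b • g).IsRoot u → (a • f + b • g).IsRoot v → u ≠ v → d' < |u - v| := by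
      intro a b hab u v hu hv huv
      exact dist_gt_of_rootSep (hdd a b hab) hu hv huv
    obtain ⟨N₁, hN₁0, hkey⟩ := key_sep hF hG hs hstne hd0 hsep
    refine ⟨max N₁ (-(s 0)), ?_⟩
    intro N hN a b hab
    have hNN₁ : N₁ < N := lt_of_le_of_lt (le_max_left _ _) hN
    have hsN : 0 < s 0 + N := by
      have := lt_of_le_of_lt (le_max_right _ _) hN
      linarith
    by_cases hb : b = 0
    · -- the polynomial is a • f
      have ha : a ≠ 0 := by
        intro h; exact hab (by rw [h, hb])
      have hpoly : a • f + b • ((X + Polynomial.C N) * g) = a • f := by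
        rw [hb]; simp
      rw [hpoly]
      constructor
      · refine ⟨smul_ne_zero ha hfm.ne_zero, ?_, ?_⟩
        · rw [roots_smul_nonzero _ ha, smul_eq_C_mul, natDegree_C_mul ha, hfcard]
        · rw [roots_smul_nonzero _ ha, hfroots]
          exact (Finset.univ.nodup).map hs.injective
      · rw [rootSep_smul ha, ← hofReal]
        have := hdd 1 0 (by simp)
        simpa using this
    · -- the polynomial is b • (C (a/b) * f + (X + C N) * g)
      set c : ℝ := a / b with hc
      set P : Polynomial ℝ := Polynomial.C c * f + (X + Polynomial.C N) * g with hP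
      have hpoly : a • f + b • ((X + Polynomial.C N) * g) = b • P := by
        rw [hP, smul_add]
        congr 1
        rw [smul_eq_C_mul, smul_eq_C_mul, ← mul_assoc, ← C_mul, hc,
          mul_div_cancel₀ a hb]
      obtain ⟨hPm, hPd⟩ := P_monic hfm hgm hfd hgd c N
      obtain ⟨r, hgtS, hltS, hrchar, hrcard, hrnodup⟩ :=
        P_struct (t := t) hfm hgm hfd hgd hfs hs hggne hglast hgzero hgs hsN c
      have hPne : P ≠ 0 := hPm.ne_zero
      -- all pairwise distances of roots of P exceed d'
      have hdist : ∀ u v : ℝ, P.IsRoot u → P.IsRoot v → u ≠ v → d' < |u - v| := by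
        have haux : ∀ i k : Fin (m+2), (i:ℕ) < (k:ℕ) → d' < r k - r i := by
          intro i k hik
          by_contra hcon
          push_neg at hcon
          have hi1 : (i:ℕ) < m+1 := by have := k.isLt; omega
          set j : Fin (m+1) := ⟨(i:ℕ), hi1⟩ with hj
          have h1 : r i < s j := hltS i j (by simp [hj])
          have h2 : s j < r k := hgtS k j (by simp [hj, hik])
          have hu : c * f.eval (r i) + (r i + N) * g.eval (r i) = 0 := by
            have := (hrchar (r i)).2 ⟨i, rfl⟩
            simpa [hP, IsRoot, eval_add, eval_mul] using this
          have hv : c * f.eval (r k) + (r k + N) * g.eval (r k) = 0 := by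
            have := (hrchar (r k)).2 ⟨k, rfl⟩
            simpa [hP, IsRoot, eval_add, eval_mul] using this
          exact hkey N hNN₁ c (r i) (r k) hu hv ⟨j, h1, h2⟩ hcon
        intro u v hu hv huv
        obtain ⟨i, rfl⟩ := (hrchar u).1 hu
        obtain ⟨k, rfl⟩ := (hrchar v).1 hv
        have hik : (i:ℕ) ≠ (k:ℕ) := fun hc' => huv (congrArg r (Fin.ext hc'))
        rcases hik.lt_or_gt with h | h
        · have := haux i k h
          rw [abs_sub_comm, abs_of_pos (by linarith : (0:ℝ) < r k - r i)]
          linarith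
        · have := haux k i h
          rw [abs_of_pos (by linarith : (0:ℝ) < r i - r k)]
          linarith
      rw [hpoly]
      constructor
      · refine ⟨smul_ne_zero hb hPne, ?_, ?_⟩
        · rw [roots_smul_nonzero _ hb, smul_eq_C_mul, natDegree_C_mul hb, hrcard, hPd]
        · rw [roots_smul_nonzero _ hb]
          exact hrnodup
      · rw [rootSep_smul hb, ← hofReal]
        exact rootSep_gt hPne hdist
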